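/- For z > 0, ε > 0, and exponents satisfying 0 < n < s and 0 < α < s - n, the quantity ε·z^(α+s-n)/(z^(s-n)+ε)² is bounded above by C(α,s,n)·ε^(α/(s-n)), where C(α,s,n) = (α/(s-n))·((s-n-α)/α)^((s-n-α)/(s-n)). -/

import Mathlib

/-- For `z > 0`, `ε > 0`, `0 < n < s`, `0 < α < s - n`:
`ε·z^(α+s-n)/(z^(s-n)+ε)² ≤ (α/(s-n))·((s-n-α)/α)^((s-n-α)/(s-n))·ε^(α/(s-n))`. -/
theorem regularization_error_bound (n s α ε z : ℝ) (hn : 0 < n) (hns : n < s)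
    (hα : 0 < α) (hαs : α < s - n) (hε : 0 < ε) (hz : 0 < z) :
    ε * z ^ (α + s - n) / (z ^ (s - n) + ε) ^ 2 ≤
      (α / (s - n)) * ((s - n - α) / α) ^ ((s - n - α) / (s - n)) * ε ^ (α / (s - n)) := by
  have ht0 : (0:ℝ) < s - n := by linarith
  set β : ℝ := α / (s - n) with hβdef
  have hβ0 : 0 < β := div_pos hα ht0
  have hβ1 : β < 1 := (div_lt_one ht0).mpr hαs
  have h1β : 0 < 1 - β := by linarith
  set w : ℝ := z ^ (s - n) with hwdef
  have hw0 : 0 < w := Real.rpow_pos_of_pos hz _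
  -- AM-GM key inequality
  have key : (w / β) ^ β * (ε / (1 - β)) ^ (1 - β) ≤ w + ε := by
    have h := Real.geom_mean_le_arith_mean2_weighted hβ0.le h1β.le
      (div_pos hw0 hβ0).le (div_pos hε h1β).le (by ring)
    calc (w / β) ^ β * (ε / (1 - β)) ^ (1 - β)
        ≤ β * (w / β) + (1 - β) * (ε / (1 - β)) := h
      _ = w + ε := by field_simp
  set K : ℝ := (w / β) ^ β * (ε / (1 - β)) ^ (1 - β) with hKdef
  have hK0 : 0 < K := mul_pos (Real.rpow_pos_of_pos (div_pos hw0 hβ0) _)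
    (Real.rpow_pos_of_pos (div_pos hε h1β) _)
  have hden : w * K ≤ (w + ε) ^ 2 := by
    rw [sq]
    exact mul_le_mul (by linarith) key hK0.le (by linarith)
  -- rewrite the numerator
  have hnum : z ^ (α + s - n) = w ^ β * w := by
    have h1 : z ^ (α + s - n) = z ^ α * z ^ (s - n) := by
      rw [← Real.rpow_add hz]; ring_nf
    have h2 : z ^ α = w ^ β := by
      rw [hwdef, ← Real.rpow_mul hz.le]
      congr 1
      rw [hβdef]; field_simp
    rw [h1, h2]
  have step1 : ε * z ^ (α + s - n) / (z ^ (s - n) + ε) ^ 2 ≤ ε * (w ^ β * w) / (w * K) := by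
    rw [hnum]
    apply div_le_div_of_nonneg_left _ (mul_pos hw0 hK0) hden
    positivity
  have hwβ : 0 < w ^ β := Real.rpow_pos_of_pos hw0 _
  have step2 : ε * (w ^ β * w) / (w * K) = β ^ β * (1 - β) ^ (1 - β) * ε ^ β := by
    rw [hKdef, Real.div_rpow hw0.le hβ0.le, Real.div_rpow hε.le h1β.le]
    rw [show ε ^ β = ε ^ (1:ℝ) / ε ^ (1 - β) by
      rw [← Real.rpow_sub hε]; ring_nf, Real.rpow_one]
    have hεβ : 0 < ε ^ (1 - β) := Real.rpow_pos_of_pos hε _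
    have hββ : 0 < β ^ β := Real.rpow_pos_of_pos hβ0 _
    have h1β1β : 0 < (1 - β) ^ (1 - β) := Real.rpow_pos_of_pos h1β _
    field_simp
  have hRHS : (α / (s - n)) * ((s - n - α) / α) ^ ((s - n - α) / (s - n)) * ε ^ (α / (s - n))
      = β ^ β * (1 - β) ^ (1 - β) * ε ^ β := by
    have e1 : (s - n - α) / (s - n) = 1 - β := by
      rw [hβdef]; field_simp; try ring
    have e2 : (s - n - α) / α = (1 - β) / β := by
      rw [hβdef]; field_simp
    rw [e1, e2, Real.div_rpow h1β.le hβ0.le]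
    have hb : β ^ (1 - β) * β ^ β = β := by
      rw [← Real.rpow_add hβ0]; norm_num
    have hβ1β : 0 < β ^ (1 - β) := Real.rpow_pos_of_pos hβ0 _
    have : α / (s - n) = β := rfl
    rw [this]
    field_simp
    linear_combination -hb
  rw [hRHS]
  calc ε * z ^ (α + s - n) / (z ^ (s - n) + ε) ^ 2 ≤ ε * (w ^ β * w) / (w * K) := step1
    _ = β ^ β * (1 - β) ^ (1 - β) * ε ^ β := step2
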